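/- Let $\omega$ be a positive Borel measure on $(a,b)$, $M: (a,b)\to\mathbb{C}^{n\times n}$, $F: (a,b)\to\mathbb{C}^n$ with $\|M(\cdot)\|, \|F(\cdot)\| \in L^1_{loc}((a,b);\omega)$, and suppose $\|M(\cdot)\|$ and $\|F(\cdot)\|$ are integrable near $a$ (i.e., over $(a,c)$ for some $c$). If $Y$ solves the integral equation $Y(x) = Y(c) + \int_c^x (M(t)Y(t) + F(t)) d\omega(t)$ on $(a,b)$, then the limit $Y(a) := \lim_{x\downarrow a} Y(x)$ exists and is finite. -/

import Mathlib

open MeasureTheory Set Filter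

lemma tail_small {a α : ℝ} (ha : a < α) (ω : Measure ℝ) (g : ℝ → ℝ)
    (hg : IntegrableOn g (Set.Ioo a α) ω) {ε : ℝ} (hε : 0 < ε) :
    ∃ β, a < β ∧ β < α ∧ ∫ t in Set.Ioo a β, g t ∂ω < ε := by
  set s : ℕ → Set ℝ := fun k => Ioo a (a + (α - a) / (k + 1)) with hs
  have hβpos : ∀ k : ℕ, (0:ℝ) < (α - a) / (k + 1) := by
    intro k
    apply div_pos (by linarith) (by positivity)
  have hanti : Antitone s := by
    intro i j hij
    apply Ioo_subset_Ioo le_rfl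
    have h1 : (0:ℝ) < (i:ℝ) + 1 := by positivity
    have h2 : (i:ℝ) + 1 ≤ (j:ℝ) + 1 := by exact_mod_cast by omega
    gcongr
  have hint : ⋂ k, s k = ∅ := by
    ext t
    simp only [hs, mem_iInter, mem_empty_iff_false, iff_false, mem_Ioo]
    intro h
    have ht : a < t := (h 0).1
    obtain ⟨k, hk⟩ := exists_nat_gt ((α - a) / (t - a))
    have h2 := (h k).2
    have h3 : (α - a) / ((k:ℝ) + 1) < t - a := by
      rw [div_lt_iff₀ (by positivity)]
      rw [div_lt_iff₀ (by linarith)] at hk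
      nlinarith
    linarith
  have h0 : IntegrableOn g (s 0) ω := by
    apply hg.mono_set
    simp [hs]
  have htend := Antitone.tendsto_setIntegral (f := g) (μ := ω)
    (fun k => measurableSet_Ioo) hanti h0
  rw [hint] at htend
  simp only [Measure.restrict_empty, integral_zero_measure] at htend
  have hev : ∀ᶠ k : ℕ in atTop, ∫ t in s k, g t ∂ω < ε := by
    filter_upwards [htend.eventually (eventually_lt_nhds hε)] with k hk using hk
  obtain ⟨N, hN⟩ := hev.exists_forall_of_atTop
  refine ⟨a + (α - a) / (max N 1 + 1), by linarith [hβpos (max N 1)], ?_, hN _ (le_max_left _ _)⟩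
  have : (α - a) / ((max N 1 : ℕ) + 1) ≤ (α - a) / 2 := by
    apply div_le_div_of_nonneg_left (by linarith) (by norm_num)
    have : (1:ℝ) ≤ (max N 1 : ℕ) := by exact_mod_cast le_max_right N 1
    linarith
  linarith

lemma mulVec_norm_le {n : ℕ} (A : Matrix (Fin n) (Fin n) ℂ) (v : Fin n → ℂ) :
    ‖A.mulVec v‖ ≤ (∑ i, ∑ j, ‖A i j‖) * ‖v‖ := by
  have hnn : (0:ℝ) ≤ (∑ i, ∑ j, ‖A i j‖) * ‖v‖ := by positivity
  rw [pi_norm_le_iff_of_nonneg hnn]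
  intro i
  have : A.mulVec v i = ∑ j, A i j * v j := rfl
  rw [this]
  calc ‖∑ j, A i j * v j‖ ≤ ∑ j, ‖A i j * v j‖ := norm_sum_le _ _
    _ = ∑ j, ‖A i j‖ * ‖v j‖ := by simp [norm_mul]
    _ ≤ ∑ j, ‖A i j‖ * ‖v‖ := Finset.sum_le_sum fun j _ =>
        mul_le_mul_of_nonneg_left (norm_le_pi_norm v j) (norm_nonneg _)
    _ = (∑ j, ‖A i j‖) * ‖v‖ := (Finset.sum_mul _ _ _).symm
    _ ≤ (∑ i, ∑ j, ‖A i j‖) * ‖v‖ := by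
        apply mul_le_mul_of_nonneg_right _ (norm_nonneg v)
        exact Finset.single_le_sum (fun i _ => Finset.sum_nonneg fun j _ => norm_nonneg _)
          (Finset.mem_univ i)

/-- The two-sided integral `∫_c^x h dω` (over `[c,x)` resp. `-∫ [x,c)`). -/
noncomputable def vInt {n : ℕ} (ω : Measure ℝ) (h : ℝ → Fin n → ℂ) (c x : ℝ) :
    Fin n → ℂ :=
  if c ≤ x then ∫ t in Set.Ico c x, h t ∂ω else -∫ t in Set.Ico x c, h t ∂ω

/-- If `M` and `F` are `ω`-integrable near the left endpoint `a` and `Y` solves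
`Y(x) = Y(c) + ∫_c^x (M Y + F) dω` on `(a,b)`, then `Y(a) := lim_{x↓a} Y(x)` exists. -/
theorem stmt5 {n : ℕ} (a b c : ℝ) (ω : Measure ℝ)
    (M : ℝ → Matrix (Fin n) (Fin n) ℂ) (F : ℝ → Fin n → ℂ) (hc : c ∈ Set.Ioo a b)
    (hMa : ∀ β ∈ Set.Ioo a b, ∀ i j, IntegrableOn (fun t => M t i j) (Set.Ioo a β) ω)
    (hFa : ∀ β ∈ Set.Ioo a b, IntegrableOn F (Set.Ioo a β) ω)
    (Y : ℝ → Fin n → ℂ)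
    (hi : ∀ α ∈ Set.Ioo a b, ∀ β ∈ Set.Ioo a b,
      IntegrableOn (fun t => (M t).mulVec (Y t) + F t) (Set.Ico α β) ω)
    (hY : ∀ x ∈ Set.Ioo a b,
      Y x = Y c + vInt ω (fun t => (M t).mulVec (Y t) + F t) c x) :
    ∃ L : Fin n → ℂ, Tendsto Y (nhdsWithin a (Set.Ioi a)) (nhds L) := by
  obtain ⟨hac, hcb⟩ := hc
  set h : ℝ → Fin n → ℂ := fun t => (M t).mulVec (Y t) + F t with hh
  set K : ℝ → ℝ := fun t => ∑ i, ∑ j, ‖M t i j‖ with hK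
  have hK0 : ∀ t, 0 ≤ K t := fun t => by positivity
  have hKint : IntegrableOn K (Ioo a c) ω := by
    apply integrable_finset_sum
    intro i _
    apply integrable_finset_sum
    intro j _
    exact (hMa c ⟨hac, hcb⟩ i j).norm
  obtain ⟨α, haα, hαc, hKhalf⟩ := tail_small hac ω K hKint (by norm_num : (0:ℝ) < 1/2)
  have hαb : α ∈ Ioo a b := ⟨haα, hαc.trans hcb⟩
  -- the key difference formula
  have key : ∀ x y : ℝ, x ∈ Ioo a b → y ∈ Ioo a b → x ≤ y → y ≤ c →
      Y y = Y x + ∫ t in Ico x y, h t ∂ω := by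
    have hvi : ∀ z, z ∈ Ioo a b → z ≤ c → Y z = Y c - ∫ t in Ico z c, h t ∂ω := by
      intro z hz hzc
      rw [hY z hz]
      unfold vInt
      split_ifs with hcz
      · have hzc' : z = c := le_antisymm hzc hcz
        subst hzc'
        simp
      · abel
    intro x y hx hy hxy hyc
    have hxc : x ≤ c := hxy.trans hyc
    have hsplit : ∫ t in Ico x c, h t ∂ω
        = (∫ t in Ico x y, h t ∂ω) + ∫ t in Ico y c, h t ∂ω := by
      rw [← setIntegral_union (Ico_disjoint_Ico_same) measurableSet_Ico
        ((hi x hx c ⟨hac, hcb⟩).mono_set (Ico_subset_Ico le_rfl hyc))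
        ((hi x hx c ⟨hac, hcb⟩).mono_set (Ico_subset_Ico hxy le_rfl)),
        Ico_union_Ico_eq_Ico hxy hyc]
    rw [hvi x hx hxc, hvi y hy hyc, hsplit]
    abel
  -- basic integrabilities
  have hIb : ∀ x ∈ Ioo a α, x ∈ Ioo a b :=
    fun x hx => ⟨hx.1, hx.2.trans (hαc.trans hcb)⟩
  have hnorm_int : ∀ x ∈ Ioo a b, IntegrableOn (fun t => ‖h t‖) (Ico x α) ω :=
    fun x hx => (hi x hx α hαb).norm
  have hKint' : IntegrableOn K (Ioo a α) ω :=
    hKint.mono_set (Ioo_subset_Ioo le_rfl hαc.le)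
  have hF_int : IntegrableOn (fun t => ‖F t‖) (Ioo a α) ω := (hFa α hαb).norm
  set S : ℝ → ℝ := fun x => ∫ t in Ico x α, ‖h t‖ ∂ω with hS
  set A0 : ℝ := ‖Y α‖ with hA0
  set C1 : ℝ := ∫ t in Ioo a α, ‖F t‖ ∂ω with hC1
  have hA0nn : 0 ≤ A0 := norm_nonneg _
  have hC1nn : 0 ≤ C1 := integral_nonneg fun t => norm_nonneg _
  have hYS : ∀ x ∈ Ioo a α, ‖Y x‖ ≤ A0 + S x := by
    intro x hx
    have hk := key x α (hIb x hx) hαb hx.2.le hαc.le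
    have hYx : Y x = Y α - ∫ t in Ico x α, h t ∂ω := by rw [hk]; abel
    rw [hYx]
    calc ‖Y α - ∫ t in Ico x α, h t ∂ω‖
        ≤ ‖Y α‖ + ‖∫ t in Ico x α, h t ∂ω‖ := norm_sub_le _ _
      _ ≤ A0 + S x := add_le_add_right (norm_integral_le_integral_norm _) _
  have hSmono : ∀ x ∈ Ioo a α, ∀ t, x ≤ t → S t ≤ S x := by
    intro x hx t hxt
    apply setIntegral_mono_set (hnorm_int x (hIb x hx))
      (Eventually.of_forall fun s => norm_nonneg _)
    exact (Ico_subset_Ico_left hxt).eventuallyLE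
  have hKle : ∀ x ∈ Ioo a α, ∫ t in Ico x α, K t ∂ω ≤ 1/2 := by
    intro x hx
    have : ∫ t in Ico x α, K t ∂ω ≤ ∫ t in Ioo a α, K t ∂ω := by
      apply setIntegral_mono_set hKint' (Eventually.of_forall fun s => hK0 s)
      have hsub : Ico x α ⊆ Ioo a α := fun t ht => ⟨hx.1.trans_le ht.1, ht.2⟩
      exact hsub.eventuallyLE
    linarith
  have hFle : ∀ x ∈ Ioo a α, ∫ t in Ico x α, ‖F t‖ ∂ω ≤ C1 := by
    intro x hx
    have hsub : Ico x α ⊆ Ioo a α := fun t ht => ⟨hx.1.trans_le ht.1, ht.2⟩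
    exact setIntegral_mono_set hF_int (Eventually.of_forall fun s => norm_nonneg _)
      hsub.eventuallyLE
  have hhK : ∀ t, ‖h t‖ ≤ K t * ‖Y t‖ + ‖F t‖ := by
    intro t
    calc ‖h t‖ ≤ ‖(M t).mulVec (Y t)‖ + ‖F t‖ := norm_add_le _ _
      _ ≤ K t * ‖Y t‖ + ‖F t‖ := add_le_add_left (mulVec_norm_le _ _) _
  have hSnn : ∀ x, 0 ≤ S x := fun x => integral_nonneg fun t => norm_nonneg _
  have hSb : ∀ x ∈ Ioo a α, S x ≤ A0 + 2 * C1 := by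
    intro x hx
    have hxb := hIb x hx
    have hsub : Ico x α ⊆ Ioo a α := fun t ht => ⟨hx.1.trans_le ht.1, ht.2⟩
    have hint2 : IntegrableOn (fun t => K t * (A0 + S x) + ‖F t‖) (Ico x α) ω :=
      ((hKint'.mono_set hsub).mul_const _).add (hF_int.mono_set hsub)
    have step : S x ≤ ∫ t in Ico x α, (K t * (A0 + S x) + ‖F t‖) ∂ω := by
      apply setIntegral_mono_on (hnorm_int x hxb) hint2 measurableSet_Ico
      intro t ht
      have ht' : t ∈ Ioo a α := hsub ht
      have h1 : ‖Y t‖ ≤ A0 + S x := by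
        have := hYS t ht'
        have := hSmono x hx t ht.1
        linarith
      calc ‖h t‖ ≤ K t * ‖Y t‖ + ‖F t‖ := hhK t
        _ ≤ K t * (A0 + S x) + ‖F t‖ := by
            apply add_le_add_left
            exact mul_le_mul_of_nonneg_left h1 (hK0 t)
    have heq : ∫ t in Ico x α, (K t * (A0 + S x) + ‖F t‖) ∂ω
        = (∫ t in Ico x α, K t ∂ω) * (A0 + S x) + ∫ t in Ico x α, ‖F t‖ ∂ω := by
      rw [integral_add ((hKint'.mono_set hsub).mul_const _) (hF_int.mono_set hsub),
        integral_mul_const]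
    have hmul : (∫ t in Ico x α, K t ∂ω) * (A0 + S x) ≤ (1/2) * (A0 + S x) :=
      mul_le_mul_of_nonneg_right (hKle x hx) (by linarith [hSnn x])
    have := hFle x hx
    rw [heq] at step
    linarith [hSnn x]
  set D : ℝ := 2 * A0 + 2 * C1 with hD
  have hD0 : 0 ≤ D := by rw [hD]; linarith
  have hYD : ∀ t ∈ Ioo a α, ‖Y t‖ ≤ D := by
    intro t ht
    have := hYS t ht
    have := hSb t ht
    simp only [hD]
    linarith
  set g : ℝ → ℝ := fun t => K t * D + ‖F t‖ with hg
  have hg_nn : ∀ t, 0 ≤ g t := fun t =>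
    add_nonneg (mul_nonneg (hK0 t) hD0) (norm_nonneg _)
  have hg_int : IntegrableOn g (Ioo a α) ω := (hKint'.mul_const _).add hF_int
  have hhg : ∀ t ∈ Ioo a α, ‖h t‖ ≤ g t := by
    intro t ht
    calc ‖h t‖ ≤ K t * ‖Y t‖ + ‖F t‖ := hhK t
      _ ≤ K t * D + ‖F t‖ := add_le_add_left
          (mul_le_mul_of_nonneg_left (hYD t ht) (hK0 t)) _
  -- Cauchy criterion
  suffices hC : Cauchy (map Y (nhdsWithin a (Set.Ioi a))) by
    obtain ⟨L, hL⟩ := CompleteSpace.complete hC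
    exact ⟨L, hL⟩
  rw [Metric.cauchy_iff]
  constructor
  · exact map_neBot
  · intro ε hε
    obtain ⟨β, haβ, hβα, hgs⟩ := tail_small haα ω g hg_int hε
    have hkey2 : ∀ p ∈ Ioo a β, ∀ q ∈ Ioo a β, p ≤ q → dist (Y q) (Y p) < ε := by
      intro p hp q hq hpq
      have hpα : p ∈ Ioo a α := ⟨hp.1, hp.2.trans hβα⟩
      have hqα : q ∈ Ioo a α := ⟨hq.1, hq.2.trans hβα⟩
      have hpb := hIb p hpα
      have hqb := hIb q hqα
      have hk := key p q hpb hqb hpq (hqα.2.trans hαc).le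
      have hsubβ : Ico p q ⊆ Ioo a β := fun t ht => ⟨hp.1.trans_le ht.1, ht.2.trans hq.2⟩
      have hsubα : Ico p q ⊆ Ioo a α := fun t ht =>
        ⟨hp.1.trans_le ht.1, (ht.2.trans hq.2).trans hβα⟩
      rw [dist_eq_norm, hk]
      have : Y p + (∫ t in Ico p q, h t ∂ω) - Y p = ∫ t in Ico p q, h t ∂ω := by abel
      rw [this]
      calc ‖∫ t in Ico p q, h t ∂ω‖ ≤ ∫ t in Ico p q, ‖h t‖ ∂ω :=
            norm_integral_le_integral_norm _
        _ ≤ ∫ t in Ico p q, g t ∂ω := by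
            apply setIntegral_mono_on ((hi p hpb q hqb).norm)
              (hg_int.mono_set hsubα) measurableSet_Ico
            intro t ht
            exact hhg t (hsubα ht)
        _ ≤ ∫ t in Ioo a β, g t ∂ω := by
            apply setIntegral_mono_set
              (hg_int.mono_set (Ioo_subset_Ioo le_rfl hβα.le))
              (Eventually.of_forall fun s => hg_nn s)
            exact hsubβ.eventuallyLE
        _ < ε := hgs
    refine ⟨Y '' (Ioo a β), ?_, ?_⟩
    · rw [mem_map]
      exact mem_of_superset (Ioo_mem_nhdsGT_of_mem ⟨le_refl a, haβ⟩)
        (subset_preimage_image Y _)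
    · rintro u ⟨p, hp, rfl⟩ v ⟨q, hq, rfl⟩
      rcases le_total p q with hpq | hpq
      · rw [dist_comm]
        exact hkey2 p hp q hq hpq
      · exact hkey2 q hq p hp hpq
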